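/- For the RS-game (N₀, v) corresponding to an RS-situation, a vector x ∈ ℝ^{N₀} satisfies the four properties (EF) ∑_{i∈N₀} x_i = v(N₀); (SR) ∑_{i∈S} x_i ≥ v(S) for every coalition S ⊆ N; (RR) for every i ∈ N there exists a nonempty coalition S^i ⊆ N with x_i = v({0, i}) − (v(S^i₀) − v(S^i))/|S^i|; and (PD) x_i − x_j = v({0, i}) − v({0, j}) for all distinct i, j ∈ N, if and only if x = ξ(v), i.e. x_0 = n·β and x_i = v({0, i}) − β for all i ∈ N, where β = min over nonempty S ⊆ N of (v(S₀) − v(S))/|S|. -/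
import Mathlib


open Finset

/-- An RS-situation with `n` retailers; the supplier is treated separately.
`c` is the unit production cost, `w` the wholesale price function and
`p i` the expected price function of retailer `i`.  All price functions are
decreasing and continuous on `[0, ∞)`, `w` exceeds `c` everywhere,
`p i 0 > w 0` and `p i` reaches the value `c` at some positive quantity. -/
structure RSSituation (n : ℕ) where
  c : ℝ
  w : ℝ → ℝ
  p : Fin n → ℝ → ℝ
  w_anti : ∀ ⦃q q' : ℝ⦄, 0 ≤ q → q ≤ q' → w q' ≤ w q
  w_cont : ContinuousOn w (Set.Ici 0)
  w_gt_c : ∀ q : ℝ, 0 ≤ q → c < w q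
  p_anti : ∀ i : Fin n, ∀ ⦃q q' : ℝ⦄, 0 ≤ q → q ≤ q' → p i q' ≤ p i q
  p_cont : ∀ i : Fin n, ContinuousOn (p i) (Set.Ici 0)
  p_zero_gt : ∀ i : Fin n, w 0 < p i 0
  exists_eq_c : ∀ i : Fin n, ∃ q : ℝ, 0 < q ∧ p i q = c

namespace RSSituation

variable {n : ℕ}

/-- The feasible set `Q^S ⊆ [0,∞)^S` of order vectors for a coalition `S` of retailers. -/
def QSet (R : RSSituation n) (S : Finset (Fin n)) : Set (S → ℝ) :=
  {q | ∀ i : S, 0 ≤ q i ∧ R.w (∑ j : S, q j) ≤ R.p i.1 (q i)}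

/-- The joint profit `∑_{i ∈ S} (p_i(q_i) - w(q_S)) q_i` of a coalition `S` of retailers. -/
def coalProfit (R : RSSituation n) (S : Finset (Fin n)) (q : S → ℝ) : ℝ :=
  ∑ i : S, (R.p i.1 (q i) - R.w (∑ j : S, q j)) * q i

/-- `q` is an optimal order vector for the coalition `S` of retailers. -/
def IsCoalOpt (R : RSSituation n) (S : Finset (Fin n)) (q : S → ℝ) : Prop :=
  q ∈ R.QSet S ∧ ∀ q' ∈ R.QSet S, R.coalProfit S q' ≤ R.coalProfit S q

/-- The feasible set of order quantities of retailer `i` at unit price `c`. -/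
def QcSet (R : RSSituation n) (i : Fin n) : Set ℝ :=
  {q | 0 ≤ q ∧ R.c ≤ R.p i q}

/-- The profit `(p_i(q) - c) q` of retailer `i` at unit price `c`. -/
def indProfit (R : RSSituation n) (i : Fin n) (q : ℝ) : ℝ :=
  (R.p i q - R.c) * q

/-- `q` is an optimal order quantity for retailer `i` at unit price `c`. -/
def IsIndOpt (R : RSSituation n) (i : Fin n) (q : ℝ) : Prop :=
  q ∈ R.QcSet i ∧ ∀ q' ∈ R.QcSet i, R.indProfit i q' ≤ R.indProfit i q

/-- `v` is the RS-game determined by chosen optimal order vectors `qS S`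
(for each retailer coalition `S`) and `qc i` (for each retailer `i`, when
cooperating with the supplier).  Players: `none` is the supplier `0`,
`some i` is retailer `i`. -/
def IsRSGame (R : RSSituation n) (qS : (S : Finset (Fin n)) → (S → ℝ))
    (qc : Fin n → ℝ) (v : Finset (Option (Fin n)) → ℝ) : Prop :=
  v ∅ = 0 ∧ v {none} = 0 ∧
    (∀ S : Finset (Fin n), S.Nonempty → v (S.image some) = R.coalProfit S (qS S)) ∧
    (∀ S : Finset (Fin n), S.Nonempty →
      v (insert none (S.image some)) = ∑ i ∈ S, R.indProfit i (qc i))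

/-- The core of a TU game on the player set `N₀ = Option (Fin n)`. -/
def core (v : Finset (Option (Fin n)) → ℝ) : Set (Option (Fin n) → ℝ) :=
  {x | ∑ i : Option (Fin n), x i = v Finset.univ ∧
    ∀ T : Finset (Option (Fin n)), v T ≤ ∑ i ∈ T, x i}

end RSSituation

/-- The mgpc-solution `ξ(v)` is the unique allocation satisfying efficiency
(EF), stability for retailers (SR), retailer reduction (RR) and preservation
of differences for retailers (PD). -/
theorem rs_game_mgpc_characterization (n : ℕ) (R : RSSituation n)
    (qS : (S : Finset (Fin n)) → (S → ℝ)) (qc : Fin n → ℝ)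
    (hqS : ∀ S : Finset (Fin n), S.Nonempty → R.IsCoalOpt S (qS S))
    (hqc : ∀ i : Fin n, R.IsIndOpt i (qc i))
    (v : Finset (Option (Fin n)) → ℝ) (hv : R.IsRSGame qS qc v)
    (β : ℝ)
    (hβ_mem : ∃ S : Finset (Fin n), S.Nonempty ∧
      β = (v (insert none (S.image some)) - v (S.image some)) / (S.card : ℝ))
    (hβ_min : ∀ S : Finset (Fin n), S.Nonempty →
      β ≤ (v (insert none (S.image some)) - v (S.image some)) / (S.card : ℝ))
    (x : Option (Fin n) → ℝ) :
    ((∑ i : Option (Fin n), x i = v Finset.univ) ∧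
     (∀ S : Finset (Fin n), v (S.image some) ≤ ∑ i ∈ S, x (some i)) ∧
     (∀ i : Fin n, ∃ S : Finset (Fin n), S.Nonempty ∧
        x (some i) = v {none, some i} -
          (v (insert none (S.image some)) - v (S.image some)) / (S.card : ℝ)) ∧
     (∀ i j : Fin n, i ≠ j →
        x (some i) - x (some j) = v {none, some i} - v {none, some j})) ↔
      (x none = (n : ℝ) * β ∧
        ∀ i : Fin n, x (some i) = v {none, some i} - β) := by
  obtain ⟨h0, hn0, hvS, hvS0⟩ := hv
  obtain ⟨S', hS'ne, hβeq⟩ := hβ_mem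
  obtain ⟨i₀, hi₀⟩ := hS'ne
  haveI : Nonempty (Fin n) := ⟨i₀⟩
  have hS'ne : S'.Nonempty := ⟨i₀, hi₀⟩
  have hpair : ∀ i : Fin n, v {none, some i} = R.indProfit i (qc i) := by
    intro i
    have h := hvS0 {i} (Finset.singleton_nonempty i)
    simpa using h
  have hS0sum : ∀ S : Finset (Fin n), S.Nonempty →
      v (insert none (S.image some)) = ∑ i ∈ S, v {none, some i} := by
    intro S hS
    rw [hvS0 S hS]
    exact Finset.sum_congr rfl fun i _ => (hpair i).symm
  have huniv : (Finset.univ : Finset (Option (Fin n)))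
      = insert none ((Finset.univ : Finset (Fin n)).image some) := by
    ext o; cases o <;> simp
  have hvuniv : v Finset.univ = ∑ i : Fin n, v {none, some i} := by
    rw [huniv, hS0sum Finset.univ Finset.univ_nonempty]
  have hcard : (0:ℝ) < (S'.card : ℝ) := by
    exact_mod_cast Finset.card_pos.mpr ⟨i₀, hi₀⟩
  constructor
  · rintro ⟨hEF, hSR, hRR, hPD⟩
    obtain ⟨T₀, hT₀ne, hx₀⟩ := hRR i₀
    set γ := (v (insert none (T₀.image some)) - v (T₀.image some)) / (T₀.card : ℝ) with hγdef
    have hγβ : β ≤ γ := hβ_min T₀ hT₀ne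
    have hxi : ∀ i : Fin n, x (some i) = v {none, some i} - γ := by
      intro i
      by_cases h : i = i₀
      · subst h; exact hx₀
      · have hpd := hPD i i₀ h
        linarith
    have hsum : ∀ S : Finset (Fin n),
        ∑ i ∈ S, x (some i) = (∑ i ∈ S, v {none, some i}) - S.card * γ := by
      intro S
      rw [Finset.sum_congr rfl fun i _ => hxi i, Finset.sum_sub_distrib,
        Finset.sum_const, nsmul_eq_mul]
    have hγle : γ ≤ β := by
      have hsr := hSR S'
      rw [hsum S'] at hsr
      rw [hβeq, hS0sum S' hS'ne, le_div_iff₀ hcard]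
      linarith
    have hγ : γ = β := le_antisymm hγle hγβ
    have hEF' : x none + ∑ i : Fin n, x (some i) = v Finset.univ := by
      rw [← hEF, Fintype.sum_option]
    constructor
    · have := hsum Finset.univ
      rw [Finset.card_univ, Fintype.card_fin] at this
      rw [hvuniv] at hEF'
      rw [hγ] at this
      linarith
    · intro i; rw [hxi i, hγ]
  · rintro ⟨hx0, hxi⟩
    have hsum : ∀ S : Finset (Fin n),
        ∑ i ∈ S, x (some i) = (∑ i ∈ S, v {none, some i}) - S.card * β := by
      intro S
      rw [Finset.sum_congr rfl fun i _ => hxi i, Finset.sum_sub_distrib,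
        Finset.sum_const, nsmul_eq_mul]
    refine ⟨?_, ?_, ?_, ?_⟩
    · rw [Fintype.sum_option, hvuniv, hsum Finset.univ, hx0,
        Finset.card_univ, Fintype.card_fin]
      ring
    · intro S
      rcases S.eq_empty_or_nonempty with rfl | hS
      · simp [h0]
      · have hcardS : (0:ℝ) < (S.card : ℝ) := by
          exact_mod_cast Finset.card_pos.mpr hS
        have hmin := hβ_min S hS
        rw [le_div_iff₀ hcardS, hS0sum S hS] at hmin
        rw [hsum S]
        linarith
    · intro i
      exact ⟨S', ⟨i₀, hi₀⟩, by rw [hxi i, hβeq]⟩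
    · intro i j _
      rw [hxi i, hxi j]; ring
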